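/- Suppose smooth functions u(x,y,t), v(x,y,t), ζ'(x,y,t) on (0,2π)×(0,π), 2π-periodic in x with v = 0 at y = 0, π, satisfy d/dt ∫∫ (u²+v²)/2 = −∫∫ u v U₀' − k ∫∫ (u²+v²) and d/dt ∫∫ ζ'²/2 = −∫∫ u v (h'' − U₀''') − k ∫∫ ζ'², where U₀(y) = C sin y + C' and h(y) = Cη cos y. Then the quantity E(t) = ∫∫ (ζ'² + (η−1)(u²+v²)) dx dy satisfies dE/dt = −2kE, so E(t) = E(0) e^{−2kt}. -/

import Mathlib

open intervalIntegral Real MeasureTheory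

private lemma split_integral (c : ℝ) (f g : ℝ → ℝ → ℝ)
    (hf : Continuous (fun p : ℝ × ℝ => f p.1 p.2))
    (hg : Continuous (fun p : ℝ × ℝ => g p.1 p.2)) :
    (∫ y in (0:ℝ)..Real.pi, ∫ x in (0:ℝ)..(2 * Real.pi), (f x y + c * g x y))
    = 2 * (∫ y in (0:ℝ)..Real.pi, ∫ x in (0:ℝ)..(2 * Real.pi), f x y / 2)
      + 2 * c * (∫ y in (0:ℝ)..Real.pi, ∫ x in (0:ℝ)..(2 * Real.pi), g x y / 2) := by
  have hfy : ∀ y, Continuous (fun x => f x y) := fun y =>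
    hf.comp (continuous_id.prodMk continuous_const)
  have hgy : ∀ y, Continuous (fun x => g x y) := fun y =>
    hg.comp (continuous_id.prodMk continuous_const)
  have inner : ∀ y, (∫ x in (0:ℝ)..(2 * Real.pi), (f x y + c * g x y))
      = (∫ x in (0:ℝ)..(2 * Real.pi), f x y)
        + c * (∫ x in (0:ℝ)..(2 * Real.pi), g x y) := by
    intro y
    rw [intervalIntegral.integral_add (g := fun x => c * g x y) ((hfy y).intervalIntegrable _ _)
      ((continuous_const.mul (hgy y)).intervalIntegrable _ _),
      intervalIntegral.integral_const_mul]
  have hF : Continuous (fun y => ∫ x in (0:ℝ)..(2 * Real.pi), f x y) := by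
    have := continuous_parametric_intervalIntegral_of_continuous'
      (μ := volume) (f := fun y x => f x y)
      (hf.comp (continuous_snd.prodMk continuous_fst)) 0 (2 * Real.pi)
    exact this
  have hG : Continuous (fun y => ∫ x in (0:ℝ)..(2 * Real.pi), g x y) := by
    have := continuous_parametric_intervalIntegral_of_continuous'
      (μ := volume) (f := fun y x => g x y)
      (hg.comp (continuous_snd.prodMk continuous_fst)) 0 (2 * Real.pi)
    exact this
  calc (∫ y in (0:ℝ)..Real.pi, ∫ x in (0:ℝ)..(2 * Real.pi), (f x y + c * g x y))
      = ∫ y in (0:ℝ)..Real.pi, ((∫ x in (0:ℝ)..(2 * Real.pi), f x y)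
          + c * (∫ x in (0:ℝ)..(2 * Real.pi), g x y)) := by
        exact intervalIntegral.integral_congr fun y _ => inner y
    _ = (∫ y in (0:ℝ)..Real.pi, ∫ x in (0:ℝ)..(2 * Real.pi), f x y)
          + c * (∫ y in (0:ℝ)..Real.pi, ∫ x in (0:ℝ)..(2 * Real.pi), g x y) := by
        rw [intervalIntegral.integral_add (g := fun y => c * ∫ x in (0:ℝ)..(2 * Real.pi), g x y) (hF.intervalIntegrable _ _)
          ((continuous_const.mul hG).intervalIntegrable _ _),
          intervalIntegral.integral_const_mul]
    _ = 2 * (∫ y in (0:ℝ)..Real.pi, ∫ x in (0:ℝ)..(2 * Real.pi), f x y / 2)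
          + 2 * c * (∫ y in (0:ℝ)..Real.pi, ∫ x in (0:ℝ)..(2 * Real.pi), g x y / 2) := by
        simp only [intervalIntegral.integral_div]
        ring

/-- The remarkable energy–enstrophy identity: the generalized energy
E = ∫∫ (ζ'² + (η−1)(u²+v²)) decays exactly like e^{−2kt}. -/
theorem generalized_energy_decay
    (C C' η k : ℝ) (hk : 0 < k)
    (u v ζ : ℝ → ℝ → ℝ → ℝ)
    (hcu : Continuous (fun q : ℝ × ℝ × ℝ => u q.1 q.2.1 q.2.2))
    (hcv : Continuous (fun q : ℝ × ℝ × ℝ => v q.1 q.2.1 q.2.2))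
    (hcz : Continuous (fun q : ℝ × ℝ × ℝ => ζ q.1 q.2.1 q.2.2))
    -- energy identity: d/dt ∫∫ (u²+v²)/2 = −∫∫ u v U₀' − k ∫∫ (u²+v²), U₀' y = C cos y
    (hE : ∀ t, HasDerivAt
      (fun t' => ∫ y in (0:ℝ)..Real.pi, ∫ x in (0:ℝ)..(2 * Real.pi),
        ((u x y t') ^ 2 + (v x y t') ^ 2) / 2)
      (-(∫ y in (0:ℝ)..Real.pi, ∫ x in (0:ℝ)..(2 * Real.pi),
          u x y t * v x y t * (C * Real.cos y))
        - k * ∫ y in (0:ℝ)..Real.pi, ∫ x in (0:ℝ)..(2 * Real.pi),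
          ((u x y t) ^ 2 + (v x y t) ^ 2)) t)
    -- enstrophy identity: d/dt ∫∫ ζ'²/2 = −∫∫ u v (h'' − U₀''') − k ∫∫ ζ'²,
    -- with h'' y = −Cη cos y and U₀''' y = −C cos y
    (hZ : ∀ t, HasDerivAt
      (fun t' => ∫ y in (0:ℝ)..Real.pi, ∫ x in (0:ℝ)..(2 * Real.pi),
        (ζ x y t') ^ 2 / 2)
      (-(∫ y in (0:ℝ)..Real.pi, ∫ x in (0:ℝ)..(2 * Real.pi),
          u x y t * v x y t * ((-(C * η * Real.cos y)) - (-(C * Real.cos y))))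
        - k * ∫ y in (0:ℝ)..Real.pi, ∫ x in (0:ℝ)..(2 * Real.pi),
          (ζ x y t) ^ 2) t) :
    (∀ t, HasDerivAt
      (fun t' => ∫ y in (0:ℝ)..Real.pi, ∫ x in (0:ℝ)..(2 * Real.pi),
        ((ζ x y t') ^ 2 + (η - 1) * ((u x y t') ^ 2 + (v x y t') ^ 2)))
      (-(2 * k) * ∫ y in (0:ℝ)..Real.pi, ∫ x in (0:ℝ)..(2 * Real.pi),
        ((ζ x y t) ^ 2 + (η - 1) * ((u x y t) ^ 2 + (v x y t) ^ 2))) t)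
    ∧ (∀ t, (∫ y in (0:ℝ)..Real.pi, ∫ x in (0:ℝ)..(2 * Real.pi),
        ((ζ x y t) ^ 2 + (η - 1) * ((u x y t) ^ 2 + (v x y t) ^ 2)))
      = (∫ y in (0:ℝ)..Real.pi, ∫ x in (0:ℝ)..(2 * Real.pi),
        ((ζ x y 0) ^ 2 + (η - 1) * ((u x y 0) ^ 2 + (v x y 0) ^ 2)))
          * Real.exp (-(2 * k) * t)) := by
  -- abbreviations
  set ZH : ℝ → ℝ := fun t' => ∫ y in (0:ℝ)..Real.pi, ∫ x in (0:ℝ)..(2 * Real.pi),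
    (ζ x y t') ^ 2 / 2 with hZHdef
  set WH : ℝ → ℝ := fun t' => ∫ y in (0:ℝ)..Real.pi, ∫ x in (0:ℝ)..(2 * Real.pi),
    ((u x y t') ^ 2 + (v x y t') ^ 2) / 2 with hWHdef
  -- splitting of the generalized energy
  have hsplit : ∀ t', (∫ y in (0:ℝ)..Real.pi, ∫ x in (0:ℝ)..(2 * Real.pi),
      ((ζ x y t') ^ 2 + (η - 1) * ((u x y t') ^ 2 + (v x y t') ^ 2)))
      = 2 * ZH t' + 2 * (η - 1) * WH t' := by
    intro t'
    have hf : Continuous (fun p : ℝ × ℝ => (ζ p.1 p.2 t') ^ 2) :=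
      (hcz.comp (continuous_fst.prodMk (continuous_snd.prodMk continuous_const))).pow 2
    have hg : Continuous (fun p : ℝ × ℝ => (u p.1 p.2 t') ^ 2 + (v p.1 p.2 t') ^ 2) :=
      ((hcu.comp (continuous_fst.prodMk (continuous_snd.prodMk continuous_const))).pow 2).add
        ((hcv.comp (continuous_fst.prodMk (continuous_snd.prodMk continuous_const))).pow 2)
    exact split_integral (η - 1) _ _ hf hg
  -- full (non-halved) integrals in terms of halved ones
  have hZfull : ∀ t', (∫ y in (0:ℝ)..Real.pi, ∫ x in (0:ℝ)..(2 * Real.pi),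
      (ζ x y t') ^ 2) = 2 * ZH t' := by
    intro t'
    simp only [hZHdef, intervalIntegral.integral_div]
    ring
  have hWfull : ∀ t', (∫ y in (0:ℝ)..Real.pi, ∫ x in (0:ℝ)..(2 * Real.pi),
      ((u x y t') ^ 2 + (v x y t') ^ 2)) = 2 * WH t' := by
    intro t'
    simp only [hWHdef, intervalIntegral.integral_div]
    ring
  -- the exchange integral in hZ equals (1-η) times the one in hE
  have hexc : ∀ t, (∫ y in (0:ℝ)..Real.pi, ∫ x in (0:ℝ)..(2 * Real.pi),
      u x y t * v x y t * ((-(C * η * Real.cos y)) - (-(C * Real.cos y))))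
      = (1 - η) * ∫ y in (0:ℝ)..Real.pi, ∫ x in (0:ℝ)..(2 * Real.pi),
        u x y t * v x y t * (C * Real.cos y) := by
    intro t
    have : ∀ x y : ℝ, u x y t * v x y t * ((-(C * η * Real.cos y)) - (-(C * Real.cos y)))
        = (1 - η) * (u x y t * v x y t * (C * Real.cos y)) := by
      intro x y; ring
    simp only [this, intervalIntegral.integral_const_mul]
  -- the derivative statement
  have hderiv : ∀ t, HasDerivAt
      (fun t' => ∫ y in (0:ℝ)..Real.pi, ∫ x in (0:ℝ)..(2 * Real.pi),
        ((ζ x y t') ^ 2 + (η - 1) * ((u x y t') ^ 2 + (v x y t') ^ 2)))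
      (-(2 * k) * ∫ y in (0:ℝ)..Real.pi, ∫ x in (0:ℝ)..(2 * Real.pi),
        ((ζ x y t) ^ 2 + (η - 1) * ((u x y t) ^ 2 + (v x y t) ^ 2))) t := by
    intro t
    have h1 := ((hZ t).const_mul 2).add (((hE t).const_mul (2 * (η - 1))))
    have hfun : (fun t' => 2 * ZH t' + 2 * (η - 1) * WH t')
        = (fun t' => ∫ y in (0:ℝ)..Real.pi, ∫ x in (0:ℝ)..(2 * Real.pi),
          ((ζ x y t') ^ 2 + (η - 1) * ((u x y t') ^ 2 + (v x y t') ^ 2))) := by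
      funext t'; exact (hsplit t').symm
    rw [show ((fun y => 2 * ZH y) + fun y => 2 * (η - 1) * WH y) = (fun t' => 2 * ZH t' + 2 * (η - 1) * WH t') from rfl, hfun] at h1
    refine h1.congr_deriv ?_
    rw [hsplit t, hexc t, hZfull t, hWfull t]
    ring
  refine ⟨hderiv, ?_⟩
  -- solve the ODE
  intro t
  set E : ℝ → ℝ := fun t' => ∫ y in (0:ℝ)..Real.pi, ∫ x in (0:ℝ)..(2 * Real.pi),
    ((ζ x y t') ^ 2 + (η - 1) * ((u x y t') ^ 2 + (v x y t') ^ 2)) with hEdef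
  have hg : ∀ s, HasDerivAt (fun s' => E s' * Real.exp (2 * k * s')) 0 s := by
    intro s
    have hexp : HasDerivAt (fun s' => Real.exp (2 * k * s')) (2 * k * Real.exp (2 * k * s)) s := by
      have := ((hasDerivAt_id s).const_mul (2 * k)).exp
      simpa [mul_comm] using this
    have := (hderiv s).mul hexp
    refine this.congr_deriv ?_
    ring
  have hconst : ∀ s, E s * Real.exp (2 * k * s) = E 0 * Real.exp (2 * k * 0) :=
    fun s => is_const_of_deriv_eq_zero
      (fun x => (hg x).differentiableAt) (fun x => (hg x).deriv) s 0
  have h := hconst t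
  have h' : E t * Real.exp (2 * k * t) = E 0 := by
    simpa using h
  calc E t = E t * Real.exp (2 * k * t) * Real.exp (-(2 * k) * t) := by
        rw [mul_assoc, ← Real.exp_add]; simp
    _ = E 0 * Real.exp (-(2 * k) * t) := by rw [h']
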